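/- arXiv:2105.14316 — 11 statements merged into one kernel-verified Lean document; each statement's English description precedes it below -/
import Mathlib

section
/- Let L be an algebraic language (operation symbols only, no constants). Suppose V is the class of L-algebras satisfying a fixed set Σ of equilinear equations, i.e. each equation has the form f(x₁,…,xₙ) = y with y among the xᵢ (unless the variety is trivial), or f(x₁,…,xₙ) = g(y₁,…,yₘ) where the set of variables on the left equals the set of variables on the right. Then V has the strong amalgamation property: whenever A, B, C ∈ V with C a subalgebra of both A and B and the underlying sets satisfy A ∩ B = C, there is an algebra D ∈ V on the set A ∪ B containing both A and B as subalgebras. -/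
/-- An algebraic language: a type of operation symbols with arities (no constants,
no relation symbols). -/
structure Lang where
  ops : Type
  arity : ops → ℕ

/-- An interpretation of the operations of `L` on a type `M`. -/
abbrev OpsOn (L : Lang) (M : Type*) : Type _ :=
  ∀ i : L.ops, (Fin (L.arity i) → M) → M

/-- A linear equation (no constants): either `f(x_{v 0},…) = x j`, or
`f(x_{v 0},…) = g(x_{w 0},…)`.  Variables are indexed by natural numbers. -/
inductive LinEq (L : Lang) where
  | opVar : (f : L.ops) → (Fin (L.arity f) → ℕ) → ℕ → LinEq L
  | opOp : (f g : L.ops) → (Fin (L.arity f) → ℕ) → (Fin (L.arity g) → ℕ) → LinEq L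

/-- An equation is equilinear if one side is a variable, or the two sides use
exactly the same set of variables. -/
def LinEq.Equilinear {L : Lang} : LinEq L → Prop
  | .opVar _ _ _ => True
  | .opOp _ _ v w => Set.range v = Set.range w

/-- Satisfaction of a linear equation under all assignments. -/
def SatEq {L : Lang} {M : Type*} (F : OpsOn L M) : LinEq L → Prop
  | .opVar f v j => ∀ σ : ℕ → M, F f (fun k => σ (v k)) = σ j
  | .opOp f g v w => ∀ σ : ℕ → M, F f (fun k => σ (v k)) = F g (fun k => σ (w k))

/-- `φ` is a homomorphism between interpretations. -/
def IsHom {L : Lang} {M N : Type*} (FM : OpsOn L M) (FN : OpsOn L N) (φ : M → N) : Prop :=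
  ∀ i t, φ (FM i t) = FN i (fun k => φ (t k))

/-- An algebra on a subset of an ambient type `U`. -/
structure SetAlg (L : Lang) (U : Type*) where
  carrier : Set U
  op : OpsOn L ↥carrier

/-- `A` is a subalgebra of `D`: the carrier is contained and the operations agree. -/
def SetAlg.Sub {L : Lang} {U : Type*} (A D : SetAlg L U) : Prop :=
  ∃ h : A.carrier ⊆ D.carrier,
    ∀ i t, ((A.op i t : U)) = (D.op i (fun k => ⟨(t k : U), h (t k).2⟩) : U)

/-- Congruence for operations: if tuples have equal underlying values, results agree. -/
theorem SetAlg.op_congr {L : Lang} {U : Type*} (X : SetAlg L U) (f : L.ops)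
    {t s : Fin (L.arity f) → ↥X.carrier} (h : ∀ k, (t k : U) = (s k : U)) :
    X.op f t = X.op f s := by
  have : t = s := funext fun k => Subtype.ext (h k)
  rw [this]

open Classical in
/-- Retraction of `U` onto a subset `S`, sending everything outside `S` to `c`. -/
noncomputable def retr {U : Type*} (S : Set U) (c : U) (hc : c ∈ S) (x : U) : ↥S :=
  if h : x ∈ S then ⟨x, h⟩ else ⟨c, hc⟩

theorem retr_val_of_mem {U : Type*} {S : Set U} {c : U} (hc : c ∈ S) {x : U} (hx : x ∈ S) :
    ((retr S c hc x : ↥S) : U) = x := by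
  simp [retr, hx]

theorem retr_val_of_not_mem {U : Type*} {S : Set U} {c : U} (hc : c ∈ S) {x : U} (hx : x ∉ S) :
    ((retr S c hc x : ↥S) : U) = c := by
  simp [retr, hx]

open Classical in
/-- The amalgamated operations on `A ∪ B`. -/
noncomputable def amalgOp {L : Lang} {U : Type*} (A B C : SetAlg L U) (c : U)
    (hcA : c ∈ A.carrier) (hcB : c ∈ B.carrier) :
    OpsOn L ↥(A.carrier ∪ B.carrier) := fun f t =>
  if h : ∀ k, (t k : U) ∈ A.carrier then
    ⟨(A.op f fun k => ⟨(t k : U), h k⟩ : U), Or.inl (Subtype.coe_prop _)⟩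
  else if h' : ∀ k, (t k : U) ∈ B.carrier then
    ⟨(B.op f fun k => ⟨(t k : U), h' k⟩ : U), Or.inr (Subtype.coe_prop _)⟩
  else if ((A.op f fun k => retr A.carrier c hcA (t k) : U)) ∈ C.carrier then
    ⟨(B.op f fun k => retr B.carrier c hcB (t k) : U), Or.inr (Subtype.coe_prop _)⟩
  else
    ⟨(A.op f fun k => retr A.carrier c hcA (t k) : U), Or.inl (Subtype.coe_prop _)⟩

/-- A variety axiomatized by equilinear equations (language without constants)
has the strong amalgamation property: an amalgam exists on the union `A ∪ B`. -/
theorem stmt_0 (L : Lang) (U : Type) (E : Set (LinEq L)) (hE : ∀ e ∈ E, e.Equilinear)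
    (A B C : SetAlg L U)
    (hAne : A.carrier.Nonempty) (hBne : B.carrier.Nonempty) (hCne : C.carrier.Nonempty)
    (hAsat : ∀ e ∈ E, SatEq A.op e) (hBsat : ∀ e ∈ E, SatEq B.op e)
    (hCsat : ∀ e ∈ E, SatEq C.op e)
    (hCA : C.Sub A) (hCB : C.Sub B)
    (hcap : A.carrier ∩ B.carrier = C.carrier) :
    ∃ D : SetAlg L U, D.carrier = A.carrier ∪ B.carrier ∧
      (∀ e ∈ E, SatEq D.op e) ∧ A.Sub D ∧ B.Sub D := by
  classical
  obtain ⟨hCAs, hCAop⟩ := hCA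
  obtain ⟨hCBs, hCBop⟩ := hCB
  obtain ⟨c, hcC⟩ := hCne
  have hcA : c ∈ A.carrier := hCAs hcC
  have hcB : c ∈ B.carrier := hCBs hcC
  refine ⟨⟨A.carrier ∪ B.carrier, amalgOp A B C c hcA hcB⟩, rfl, ?_, ?_, ?_⟩
  · -- equations hold
    intro e he
    cases e with
    | opVar f v j =>
      simp only [SatEq]
      intro σ
      by_cases hj : j ∈ Set.range v
      · obtain ⟨k0, hk0⟩ := hj
        have hσA : ∀ m, ((retr A.carrier c hcA (σ m) : ↥A.carrier) : U)
            = if (σ m : U) ∈ A.carrier then (σ m : U) else c := by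
          intro m; by_cases h : (σ m : U) ∈ A.carrier
          · rw [retr_val_of_mem hcA h, if_pos h]
          · rw [retr_val_of_not_mem hcA h, if_neg h]
        have hα := hAsat _ he (fun m => retr A.carrier c hcA (σ m))
        have hβ := hBsat _ he (fun m => retr B.carrier c hcB (σ m))
        show amalgOp A B C c hcA hcB f (fun k => σ (v k)) = σ j
        simp only [amalgOp]
        split_ifs with h1 h2 h3
        · -- all in A
          apply Subtype.ext
          show (A.op f _ : U) = (σ j : U)
          have e1 : (A.op f (fun k => ⟨(σ (v k) : U), h1 k⟩) : U)
              = (A.op f (fun k => retr A.carrier c hcA (σ (v k))) : U) :=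
            congrArg _ (A.op_congr f fun k => (retr_val_of_mem hcA (h1 k)).symm)
          rw [e1, congrArg Subtype.val hα, retr_val_of_mem hcA]
          rw [← hk0]; exact h1 k0
        · -- all in B
          apply Subtype.ext
          show (B.op f _ : U) = (σ j : U)
          have e1 : (B.op f (fun k => ⟨(σ (v k) : U), h2 k⟩) : U)
              = (B.op f (fun k => retr B.carrier c hcB (σ (v k))) : U) :=
            congrArg _ (B.op_congr f fun k => (retr_val_of_mem hcB (h2 k)).symm)
          rw [e1, congrArg Subtype.val hβ, retr_val_of_mem hcB]
          rw [← hk0]; exact h2 k0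
        · -- mixed, A-value lands in C: use B side
          apply Subtype.ext
          show (B.op f _ : U) = (σ j : U)
          rw [congrArg Subtype.val hβ]
          -- need σ j ∈ B
          have hjC : ((retr A.carrier c hcA (σ j) : ↥A.carrier) : U) ∈ C.carrier := by
            rw [← congrArg Subtype.val hα]; exact h3
          by_cases hA : (σ j : U) ∈ A.carrier
          · have : (σ j : U) ∈ C.carrier := by
              rw [retr_val_of_mem hcA hA] at hjC; exact hjC
            exact retr_val_of_mem hcB (hCBs this)
          · have hB : (σ j : U) ∈ B.carrier := (σ j).2.resolve_left hA
            exact retr_val_of_mem hcB hB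
        · -- mixed, A-value not in C: use A side
          apply Subtype.ext
          show (A.op f _ : U) = (σ j : U)
          rw [congrArg Subtype.val hα]
          by_cases hA : (σ j : U) ∈ A.carrier
          · exact retr_val_of_mem hcA hA
          · exfalso
            apply h3
            rw [congrArg Subtype.val hα, retr_val_of_not_mem hcA hA]
            exact hcC
      · -- j not among the variables: everything is a singleton
        have hAone : ∀ x : ↥A.carrier, (x : U) = c := by
          intro x
          have h1 : A.op f (fun k => if v k = j then x else ⟨c, hcA⟩)
              = (if j = j then x else ⟨c, hcA⟩) :=
            hAsat _ he (fun m => if m = j then x else ⟨c, hcA⟩)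
          have h2 : A.op f (fun _ => (⟨c, hcA⟩ : ↥A.carrier)) = ⟨c, hcA⟩ :=
            hAsat _ he (fun _ => (⟨c, hcA⟩ : ↥A.carrier))
          have harg : (fun k => if v k = j then x else (⟨c, hcA⟩ : ↥A.carrier))
              = (fun _ : Fin (L.arity f) => (⟨c, hcA⟩ : ↥A.carrier)) := by
            funext k
            rw [if_neg (fun h => hj ⟨k, h⟩)]
          rw [harg, h2, if_pos rfl] at h1
          exact congrArg Subtype.val h1.symm
        have hBone : ∀ x : ↥B.carrier, (x : U) = c := by
          intro x
          have h1 : B.op f (fun k => if v k = j then x else ⟨c, hcB⟩)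
              = (if j = j then x else ⟨c, hcB⟩) :=
            hBsat _ he (fun m => if m = j then x else ⟨c, hcB⟩)
          have h2 : B.op f (fun _ => (⟨c, hcB⟩ : ↥B.carrier)) = ⟨c, hcB⟩ :=
            hBsat _ he (fun _ => (⟨c, hcB⟩ : ↥B.carrier))
          have harg : (fun k => if v k = j then x else (⟨c, hcB⟩ : ↥B.carrier))
              = (fun _ : Fin (L.arity f) => (⟨c, hcB⟩ : ↥B.carrier)) := by
            funext k
            rw [if_neg (fun h => hj ⟨k, h⟩)]
          rw [harg, h2, if_pos rfl] at h1
          exact congrArg Subtype.val h1.symm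
        have hall : ∀ x : ↥(A.carrier ∪ B.carrier), (x : U) = c := by
          intro x
          rcases x.2 with h | h
          · exact hAone ⟨x, h⟩
          · exact hBone ⟨x, h⟩
        apply Subtype.ext
        rw [hall, hall]
    | opOp f g v w =>
      have hvw : Set.range v = Set.range w := hE _ he
      simp only [SatEq]
      intro σ
      have key : ∀ S : Set U, (∀ k, (σ (v k) : U) ∈ S) ↔ (∀ k, (σ (w k) : U) ∈ S) := by
        intro S
        constructor
        · intro h k
          have : w k ∈ Set.range v := by rw [hvw]; exact ⟨k, rfl⟩
          obtain ⟨k', hk'⟩ := this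
          rw [← hk']; exact h k'
        · intro h k
          have : v k ∈ Set.range w := by rw [← hvw]; exact ⟨k, rfl⟩
          obtain ⟨k', hk'⟩ := this
          rw [← hk']; exact h k'
      have hα := hAsat _ he (fun m => retr A.carrier c hcA (σ m))
      have hβ := hBsat _ he (fun m => retr B.carrier c hcB (σ m))
      show amalgOp A B C c hcA hcB f (fun k => σ (v k))
          = amalgOp A B C c hcA hcB g (fun k => σ (w k))
      simp only [amalgOp]
      by_cases h1 : ∀ k, (σ (v k) : U) ∈ A.carrier
      · have h2 : ∀ k, (σ (w k) : U) ∈ A.carrier := (key A.carrier).1 h1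
        rw [dif_pos h1, dif_pos h2]
        apply Subtype.ext
        calc (A.op f (fun k => ⟨(σ (v k) : U), h1 k⟩) : U)
            = (A.op f (fun k => retr A.carrier c hcA (σ (v k))) : U) :=
              congrArg _ (A.op_congr f fun k => (retr_val_of_mem hcA (h1 k)).symm)
          _ = (A.op g (fun k => retr A.carrier c hcA (σ (w k))) : U) := congrArg _ hα
          _ = (A.op g (fun k => ⟨(σ (w k) : U), h2 k⟩) : U) :=
              congrArg _ (A.op_congr g fun k => retr_val_of_mem hcA (h2 k))
      · have h2 : ¬ ∀ k, (σ (w k) : U) ∈ A.carrier := fun h => h1 ((key A.carrier).2 h)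
        rw [dif_neg h1, dif_neg h2]
        by_cases h3 : ∀ k, (σ (v k) : U) ∈ B.carrier
        · have h4 : ∀ k, (σ (w k) : U) ∈ B.carrier := (key B.carrier).1 h3
          rw [dif_pos h3, dif_pos h4]
          apply Subtype.ext
          calc (B.op f (fun k => ⟨(σ (v k) : U), h3 k⟩) : U)
              = (B.op f (fun k => retr B.carrier c hcB (σ (v k))) : U) :=
                congrArg _ (B.op_congr f fun k => (retr_val_of_mem hcB (h3 k)).symm)
            _ = (B.op g (fun k => retr B.carrier c hcB (σ (w k))) : U) := congrArg _ hβ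
            _ = (B.op g (fun k => ⟨(σ (w k) : U), h4 k⟩) : U) :=
                congrArg _ (B.op_congr g fun k => retr_val_of_mem hcB (h4 k))
        · have h4 : ¬ ∀ k, (σ (w k) : U) ∈ B.carrier := fun h => h3 ((key B.carrier).2 h)
          rw [dif_neg h3, dif_neg h4]
          have hαv : (A.op f (fun k => retr A.carrier c hcA (σ (v k))) : U)
              = (A.op g (fun k => retr A.carrier c hcA (σ (w k))) : U) := congrArg _ hα
          have hβv : (B.op f (fun k => retr B.carrier c hcB (σ (v k))) : U)
              = (B.op g (fun k => retr B.carrier c hcB (σ (w k))) : U) := congrArg _ hβ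
          apply Subtype.ext
          by_cases hC : (A.op f (fun k => retr A.carrier c hcA (σ (v k))) : U) ∈ C.carrier
          · rw [if_pos hC, if_pos (hαv ▸ hC)]
            exact hβv
          · rw [if_neg hC, if_neg (fun h => hC (hαv.symm ▸ h))]
            exact hαv
  · -- A is a subalgebra of D
    refine ⟨Set.subset_union_left, ?_⟩
    intro f t
    show (A.op f t : U) = (amalgOp A B C c hcA hcB f
      (fun k => ⟨(t k : U), Set.subset_union_left (t k).2⟩) : U)
    simp only [amalgOp]
    have hA : ∀ k, (((⟨(t k : U), Set.subset_union_left (t k).2⟩ :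
        ↥(A.carrier ∪ B.carrier))) : U) ∈ A.carrier := fun k => (t k).2
    rw [dif_pos hA]
  · -- B is a subalgebra of D
    refine ⟨Set.subset_union_right, ?_⟩
    intro f t
    show (B.op f t : U) = (amalgOp A B C c hcA hcB f
      (fun k => ⟨(t k : U), Set.subset_union_right (t k).2⟩) : U)
    simp only [amalgOp]
    by_cases hA : ∀ k, (((⟨(t k : U), Set.subset_union_right (t k).2⟩ :
        ↥(A.carrier ∪ B.carrier))) : U) ∈ A.carrier
    · rw [dif_pos hA]
      -- all entries in C: go through C
      have hC : ∀ k, (t k : U) ∈ C.carrier := fun k => hcap ▸ ⟨hA k, (t k).2⟩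
      have e1 := hCBop f (fun k => ⟨(t k : U), hC k⟩)
      have e2 := hCAop f (fun k => ⟨(t k : U), hC k⟩)
      have e3 : (B.op f (fun k => ⟨(((⟨(t k : U), hC k⟩ : ↥C.carrier)) : U),
          hCBs (hC k)⟩) : U) = (B.op f t : U) :=
        congrArg _ (B.op_congr f fun k => rfl)
      rw [← e3, ← e1, e2]
    · rw [dif_neg hA, dif_pos (fun k => (t k).2 :
        ∀ k, (((⟨(t k : U), Set.subset_union_right (t k).2⟩ :
          ↥(A.carrier ∪ B.carrier))) : U) ∈ B.carrier)]
end

section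
/- Let V be a nontrivial class of algebras (in a language without constants) axiomatized by a set of equilinear equations. Then for every positive natural number n, V contains an algebra with exactly n elements. -/
section Aux
variable {L : Lang} {A : Type} {D : Type} (FA : OpsOn L A)

/-- `t` matches some projection pattern for `f` that is valid in `A`. -/
def Matches (D : Type) (FA : OpsOn L A) (f : L.ops) (t : Fin (L.arity f) → D) : Prop :=
  ∃ (v : Fin (L.arity f) → ℕ) (j : ℕ) (σ : ℕ → D), SatEq FA (.opVar f v j) ∧ ∀ k, σ (v k) = t k

open Classical in
noncomputable def FD (d : D) : OpsOn L D := fun f t =>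
  if h : Matches D FA f t then
    h.choose_spec.choose_spec.choose h.choose_spec.choose
  else d

/-- Two matches of linked tuples give the same value. -/
theorem cross_val {a b : A} (hab : a ≠ b)
    {f g : L.ops} {v : Fin (L.arity f) → ℕ} {w : Fin (L.arity g) → ℕ}
    (hfg : ∀ σ : ℕ → A, FA f (fun k => σ (v k)) = FA g (fun k => σ (w k)))
    {v₁ j₁ w₁ i₁} (h₁ : SatEq FA (.opVar f v₁ j₁)) (h₂ : SatEq FA (.opVar g w₁ i₁))
    (σ τ υ : ℕ → D) (hτ : ∀ k, τ (v₁ k) = σ (v k)) (hυ : ∀ k, υ (w₁ k) = σ (w k)) :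
    τ j₁ = υ i₁ := by
  classical
  by_contra hne
  set ind : D → A := fun x => if x = τ j₁ then a else b with hind
  have e1 : FA f (fun k => ind (τ (v₁ k))) = ind (τ j₁) := h₁ (fun m => ind (τ m))
  have e2 : FA g (fun k => ind (υ (w₁ k))) = ind (υ i₁) := h₂ (fun m => ind (υ m))
  have e3 : FA f (fun k => ind (σ (v k))) = FA g (fun k => ind (σ (w k))) :=
    hfg (fun m => ind (σ m))
  have c1 : (fun k => ind (τ (v₁ k))) = fun k => ind (σ (v k)) := by
    funext k; rw [hτ]
  have c2 : (fun k => ind (υ (w₁ k))) = fun k => ind (σ (w k)) := by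
    funext k; rw [hυ]
  rw [c1] at e1; rw [c2] at e2
  have : ind (τ j₁) = ind (υ i₁) := by rw [← e1, ← e2, e3]
  simp only [hind, if_pos rfl] at this
  rw [if_neg (fun h => hne h.symm)] at this
  exact hab this

/-- Two matches of the same tuple give the same value. -/
theorem same_val {a b : A} (hab : a ≠ b)
    {f : L.ops} {v₁ j₁ v₂ j₂} (h₁ : SatEq FA (.opVar f v₁ j₁)) (h₂ : SatEq FA (.opVar f v₂ j₂))
    (τ₁ τ₂ : ℕ → D) (ht : ∀ k, τ₁ (v₁ k) = τ₂ (v₂ k)) :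
    τ₁ j₁ = τ₂ j₂ := by
  classical
  by_contra hne
  set ind : D → A := fun x => if x = τ₁ j₁ then a else b with hind
  have e1 : FA f (fun k => ind (τ₁ (v₁ k))) = ind (τ₁ j₁) := h₁ (fun m => ind (τ₁ m))
  have e2 : FA f (fun k => ind (τ₂ (v₂ k))) = ind (τ₂ j₂) := h₂ (fun m => ind (τ₂ m))
  have c1 : (fun k => ind (τ₁ (v₁ k))) = fun k => ind (τ₂ (v₂ k)) := by
    funext k; rw [ht]
  rw [c1, e2] at e1
  simp only [hind, if_pos rfl] at e1
  rw [if_neg (fun h => hne h.symm)] at e1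
  exact hab e1.symm

/-- The value of `FD` on a matched tuple. -/
theorem FD_eq {a b : A} (hab : a ≠ b) (d : D) {f : L.ops} {v j}
    (h : SatEq FA (.opVar f v j)) (σ : ℕ → D) (t : Fin (L.arity f) → D)
    (ht : ∀ k, σ (v k) = t k) : FD FA d f t = σ j := by
  have hm : Matches D FA f t := ⟨v, j, σ, h, ht⟩
  rw [FD, dif_pos hm]
  exact same_val FA hab hm.choose_spec.choose_spec.choose_spec.1 h
    _ σ (fun k => by
      rw [hm.choose_spec.choose_spec.choose_spec.2 k, ht k])

/-- Matching transfers through a valid `opOp` equation. -/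
theorem transfer {f g : L.ops} {v : Fin (L.arity f) → ℕ} {w : Fin (L.arity g) → ℕ}
    (hfg : ∀ σ : ℕ → A, FA f (fun k => σ (v k)) = FA g (fun k => σ (w k)))
    (σ : ℕ → D) {v₁ j₁} (h₁ : SatEq FA (.opVar f v₁ j₁)) (τ : ℕ → D)
    (hτ : ∀ k, τ (v₁ k) = σ (v k)) :
    ∃ (w' : Fin (L.arity g) → ℕ) (j' : ℕ) (σ' : ℕ → D), SatEq FA (.opVar g w' j') ∧ (∀ k, σ' (w' k) = σ (w k)) ∧
      σ' j' = τ j₁ := by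
  classical
  set r : ℕ ⊕ ℕ → ℕ ⊕ ℕ → Prop :=
    fun x y => ∃ k, x = Sum.inl (v₁ k) ∧ y = Sum.inr (v k) with hr
  set s : Setoid (ℕ ⊕ ℕ) := Relation.EqvGen.setoid r with hs
  obtain ⟨emb, hemb⟩ := Countable.exists_injective_nat (Quotient s)
  set c : ℕ ⊕ ℕ → ℕ := fun x => emb (Quotient.mk s x) with hc
  have key : ∀ k, c (Sum.inl (v₁ k)) = c (Sum.inr (v k)) := fun k =>
    congrArg emb (Quotient.sound (Relation.EqvGen.rel _ _ ⟨k, rfl, rfl⟩))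
  set val : ℕ ⊕ ℕ → D := Sum.elim τ σ with hval
  have hresp : ∀ x y, Relation.EqvGen r x y → val x = val y := by
    intro x y h
    induction h with
    | rel x y h => obtain ⟨k, hx, hy⟩ := h; subst hx; subst hy; exact hτ k
    | refl => rfl
    | symm _ _ _ ih => exact ih.symm
    | trans _ _ _ _ _ ih1 ih2 => exact ih1.trans ih2
  set V : Quotient s → D := Quotient.lift val hresp with hV
  set σ' : ℕ → D := fun m => if h : ∃ q : Quotient s, emb q = m then V h.choose else τ j₁
    with hσ'
  have hσ'c : ∀ x, σ' (c x) = val x := by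
    intro x
    have hex : ∃ q : Quotient s, emb q = c x := ⟨Quotient.mk s x, rfl⟩
    rw [hσ']
    simp only [dif_pos hex]
    have h2 : hex.choose = Quotient.mk s x := hemb hex.choose_spec
    rw [h2]
    rfl
  refine ⟨fun k => c (Sum.inr (w k)), c (Sum.inl j₁), σ', ?_, ?_, ?_⟩
  · intro ρ
    have e3 : FA f (fun k => ρ (c (Sum.inr (v k)))) = FA g (fun k => ρ (c (Sum.inr (w k)))) :=
      hfg (fun m => ρ (c (Sum.inr m)))
    have e1 : FA f (fun k => ρ (c (Sum.inl (v₁ k)))) = ρ (c (Sum.inl j₁)) :=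
      h₁ (fun m => ρ (c (Sum.inl m)))
    have c1 : (fun k => ρ (c (Sum.inl (v₁ k)))) = fun k => ρ (c (Sum.inr (v k))) := by
      funext k; rw [key]
    rw [c1, e3] at e1
    exact e1
  · intro k; exact hσ'c (Sum.inr (w k))
  · exact hσ'c (Sum.inl j₁)

end Aux

theorem stmt_2' (L : Lang) (E : Set (LinEq L))
    (A : Type) (FA : OpsOn L A) (hAsat : ∀ e ∈ E, SatEq FA e)
    (a b : A) (hab : a ≠ b)
    (n : ℕ) (hn : 0 < n) :
    ∃ (D : Type) (FD : OpsOn L D),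
      (∀ e ∈ E, SatEq FD e) ∧ Nat.card D = n := by
  classical
  have d : Fin n := ⟨0, hn⟩
  refine ⟨Fin n, FD FA d, ?_, by simp⟩
  intro e he
  have hAe := hAsat e he
  match e with
  | .opVar f v j =>
    intro σ
    exact FD_eq FA hab d hAe σ _ (fun k => rfl)
  | .opOp f g v w =>
    intro σ
    have hfg : ∀ ρ : ℕ → A, FA f (fun k => ρ (v k)) = FA g (fun k => ρ (w k)) := hAe
    have hgf : ∀ ρ : ℕ → A, FA g (fun k => ρ (w k)) = FA f (fun k => ρ (v k)) :=
      fun ρ => (hfg ρ).symm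
    by_cases hm : Matches (Fin n) FA f (fun k => σ (v k))
    · obtain ⟨v₁, j₁, τ, h₁, hτ⟩ := hm
      obtain ⟨w', j', σ', hsat', hmatch', hval'⟩ := transfer FA hfg σ h₁ τ hτ
      rw [FD_eq FA hab d h₁ τ _ hτ, FD_eq FA hab d hsat' σ' _ hmatch', hval']
    · have hm' : ¬ Matches (Fin n) FA g (fun k => σ (w k)) := by
        intro ⟨w₁, i₁, υ, h₂, hυ⟩
        obtain ⟨v', j', σ', hsat', hmatch', _⟩ := transfer FA hgf σ h₂ υ hυ
        exact hm ⟨v', j', σ', hsat', hmatch'⟩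
      rw [FD, dif_neg hm, FD, dif_neg hm']

/-- A nontrivial class of algebras axiomatized by equilinear equations (no constants)
contains, for every positive `n`, an algebra with exactly `n` elements. -/
theorem stmt_2 (L : Lang) (E : Set (LinEq L)) (hE : ∀ e ∈ E, e.Equilinear)
    (A : Type) (FA : OpsOn L A) (hAsat : ∀ e ∈ E, SatEq FA e)
    (a b : A) (hab : a ≠ b)
    (n : ℕ) (hn : 0 < n) :
    ∃ (D : Type) (FD : OpsOn L D),
      (∀ e ∈ E, SatEq FD e) ∧ Nat.card D = n := by
  exact stmt_2' L E A FA hAsat a b hab n hn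
end

section
/- The class of algebras (M, f) where f is a ternary Maltsev operation, i.e. satisfying f(x,y,y) = x and f(x,x,y) = y, has the strong amalgamation property: if A, B, C are Maltsev algebras with C a subalgebra of both A and B and A ∩ B = C, then there is a Maltsev algebra structure on A ∪ B extending both A and B. -/
/-- The class of algebras with a Maltsev operation has the strong amalgamation
property: given Maltsev algebras on sets `A`, `B` with common subalgebra `C = A ∩ B`,
there is a Maltsev structure on `A ∪ B` extending both. -/
theorem stmt_4 {U : Type} (A B C : Set U) (hCne : C.Nonempty)
    (fA : ↥A → ↥A → ↥A → ↥A) (fB : ↥B → ↥B → ↥B → ↥B) (fC : ↥C → ↥C → ↥C → ↥C)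
    (hA1 : ∀ x y, fA x y y = x) (hA2 : ∀ x y, fA x x y = y)
    (hB1 : ∀ x y, fB x y y = x) (hB2 : ∀ x y, fB x x y = y)
    (hC1 : ∀ x y, fC x y y = x) (hC2 : ∀ x y, fC x x y = y)
    (hCA : C ⊆ A) (hCB : C ⊆ B) (hAB : A ∩ B = C)
    (hextA : ∀ x y z : ↥C,
      ((fC x y z : U)) = (fA ⟨x, hCA x.2⟩ ⟨y, hCA y.2⟩ ⟨z, hCA z.2⟩ : U))
    (hextB : ∀ x y z : ↥C,
      ((fC x y z : U)) = (fB ⟨x, hCB x.2⟩ ⟨y, hCB y.2⟩ ⟨z, hCB z.2⟩ : U)) :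
    ∃ fD : ↥(A ∪ B) → ↥(A ∪ B) → ↥(A ∪ B) → ↥(A ∪ B),
      (∀ x y, fD x y y = x) ∧ (∀ x y, fD x x y = y) ∧
      (∀ x y z : ↥A, ((fA x y z : U)) =
        (fD ⟨x, Set.mem_union_left B x.2⟩ ⟨y, Set.mem_union_left B y.2⟩
          ⟨z, Set.mem_union_left B z.2⟩ : U)) ∧
      (∀ x y z : ↥B, ((fB x y z : U)) =
        (fD ⟨x, Set.mem_union_right A x.2⟩ ⟨y, Set.mem_union_right A y.2⟩
          ⟨z, Set.mem_union_right A z.2⟩ : U)) := by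
  classical
  refine ⟨fun x y z =>
    if h : (x : U) ∈ A ∧ (y : U) ∈ A ∧ (z : U) ∈ A then
      ⟨fA ⟨x, h.1⟩ ⟨y, h.2.1⟩ ⟨z, h.2.2⟩,
        Set.mem_union_left B (fA ⟨x, h.1⟩ ⟨y, h.2.1⟩ ⟨z, h.2.2⟩).2⟩
    else if h' : (x : U) ∈ B ∧ (y : U) ∈ B ∧ (z : U) ∈ B then
      ⟨fB ⟨x, h'.1⟩ ⟨y, h'.2.1⟩ ⟨z, h'.2.2⟩,
        Set.mem_union_right A (fB ⟨x, h'.1⟩ ⟨y, h'.2.1⟩ ⟨z, h'.2.2⟩).2⟩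
    else if y = z then x else if x = y then z else x, ?_, ?_, ?_, ?_⟩
  · intro x y
    by_cases h : (x : U) ∈ A ∧ (y : U) ∈ A ∧ (y : U) ∈ A
    · simp only [dif_pos h]
      exact Subtype.ext (by simpa using congrArg Subtype.val (hA1 ⟨x, h.1⟩ ⟨y, h.2.1⟩))
    · by_cases h' : (x : U) ∈ B ∧ (y : U) ∈ B ∧ (y : U) ∈ B
      · simp only [dif_neg h, dif_pos h']
        exact Subtype.ext (by simpa using congrArg Subtype.val (hB1 ⟨x, h'.1⟩ ⟨y, h'.2.1⟩))
      · beta_reduce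
        rw [dif_neg h, dif_neg h', if_pos rfl]
  · intro x y
    by_cases h : (x : U) ∈ A ∧ (x : U) ∈ A ∧ (y : U) ∈ A
    · simp only [dif_pos h]
      exact Subtype.ext (by simpa using congrArg Subtype.val (hA2 ⟨x, h.1⟩ ⟨y, h.2.2⟩))
    · by_cases h' : (x : U) ∈ B ∧ (x : U) ∈ B ∧ (y : U) ∈ B
      · simp only [dif_neg h, dif_pos h']
        exact Subtype.ext (by simpa using congrArg Subtype.val (hB2 ⟨x, h'.1⟩ ⟨y, h'.2.2⟩))
      · beta_reduce
        rw [dif_neg h, dif_neg h']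
        by_cases hxy : x = y
        · subst hxy; rw [if_pos rfl]
        · rw [if_neg hxy, if_pos rfl]
  · intro x y z
    have h : ((⟨(x : U), Set.mem_union_left B x.2⟩ : ↥(A ∪ B)) : U) ∈ A ∧
        ((⟨(y : U), Set.mem_union_left B y.2⟩ : ↥(A ∪ B)) : U) ∈ A ∧
        ((⟨(z : U), Set.mem_union_left B z.2⟩ : ↥(A ∪ B)) : U) ∈ A :=
      ⟨x.2, y.2, z.2⟩
    simp only [dif_pos h]
  · intro x y z
    by_cases h : (x : U) ∈ A ∧ (y : U) ∈ A ∧ (z : U) ∈ A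
    · simp only [dif_pos (show ((⟨(x : U), Set.mem_union_right A x.2⟩ : ↥(A ∪ B)) : U) ∈ A ∧
        ((⟨(y : U), Set.mem_union_right A y.2⟩ : ↥(A ∪ B)) : U) ∈ A ∧
        ((⟨(z : U), Set.mem_union_right A z.2⟩ : ↥(A ∪ B)) : U) ∈ A from h)]
      have hx : (x : U) ∈ C := hAB ▸ ⟨h.1, x.2⟩
      have hy : (y : U) ∈ C := hAB ▸ ⟨h.2.1, y.2⟩
      have hz : (z : U) ∈ C := hAB ▸ ⟨h.2.2, z.2⟩
      have e1 := hextA ⟨x, hx⟩ ⟨y, hy⟩ ⟨z, hz⟩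
      have e2 := hextB ⟨x, hx⟩ ⟨y, hy⟩ ⟨z, hz⟩
      simp only at e1 e2
      rw [show fB x y z = fB ⟨(x : U), hCB hx⟩ ⟨(y : U), hCB hy⟩ ⟨(z : U), hCB hz⟩ from rfl,
        ← e2, e1]
    · simp only [dif_neg h, dif_pos (show ((⟨(x : U), Set.mem_union_right A x.2⟩ : ↥(A ∪ B)) : U) ∈ B ∧
        ((⟨(y : U), Set.mem_union_right A y.2⟩ : ↥(A ∪ B)) : U) ∈ B ∧
        ((⟨(z : U), Set.mem_union_right A z.2⟩ : ↥(A ∪ B)) : U) ∈ B from ⟨x.2, y.2, z.2⟩)]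
end

section
/- The class of algebras with a majority operation, i.e. a ternary operation m satisfying m(x,x,y) = x, m(x,y,x) = x, and m(y,x,x) = x, has the strong amalgamation property and the joint embedding property. -/
open Classical in
noncomputable def glueOp {U : Type} (A B : Set U)
    (mA : ↥A → ↥A → ↥A → ↥A) (mB : ↥B → ↥B → ↥B → ↥B) :
    ↥(A ∪ B) → ↥(A ∪ B) → ↥(A ∪ B) → ↥(A ∪ B) :=
  fun x y z =>
    if x = y then x else if x = z then x else if y = z then y else
    if h : x.1 ∈ A ∧ y.1 ∈ A ∧ z.1 ∈ A then
      Set.inclusion Set.subset_union_left (mA ⟨x.1, h.1⟩ ⟨y.1, h.2.1⟩ ⟨z.1, h.2.2⟩)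
    else if h' : x.1 ∈ B ∧ y.1 ∈ B ∧ z.1 ∈ B then
      Set.inclusion Set.subset_union_right (mB ⟨x.1, h'.1⟩ ⟨y.1, h'.2.1⟩ ⟨z.1, h'.2.2⟩)
    else x

open Classical in
noncomputable def sumOp {A B : Type} (mA : A → A → A → A) (mB : B → B → B → B) :
    A ⊕ B → A ⊕ B → A ⊕ B → A ⊕ B :=
  fun x y z =>
    if x = y then x else if x = z then x else if y = z then y else
    match x, y, z with
    | .inl a, .inl b, .inl c => .inl (mA a b c)
    | .inr a, .inr b, .inr c => .inr (mB a b c)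
    | x, _, _ => x

/-- The class of algebras with a majority operation has the strong amalgamation
property and the joint embedding property. -/
theorem stmt_5 :
    (∀ (U : Type) (A B C : Set U), C.Nonempty →
      ∀ (mA : ↥A → ↥A → ↥A → ↥A) (mB : ↥B → ↥B → ↥B → ↥B) (mC : ↥C → ↥C → ↥C → ↥C),
      (∀ x y, mA x x y = x ∧ mA x y x = x ∧ mA y x x = x) →
      (∀ x y, mB x x y = x ∧ mB x y x = x ∧ mB y x x = x) →
      (∀ x y, mC x x y = x ∧ mC x y x = x ∧ mC y x x = x) →
      ∀ (hCA : C ⊆ A) (hCB : C ⊆ B), A ∩ B = C →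
      (∀ x y z : ↥C,
        ((mC x y z : U)) = (mA ⟨x, hCA x.2⟩ ⟨y, hCA y.2⟩ ⟨z, hCA z.2⟩ : U)) →
      (∀ x y z : ↥C,
        ((mC x y z : U)) = (mB ⟨x, hCB x.2⟩ ⟨y, hCB y.2⟩ ⟨z, hCB z.2⟩ : U)) →
      ∃ mD : ↥(A ∪ B) → ↥(A ∪ B) → ↥(A ∪ B) → ↥(A ∪ B),
        (∀ x y, mD x x y = x ∧ mD x y x = x ∧ mD y x x = x) ∧
        (∀ x y z : ↥A, ((mA x y z : U)) =
          (mD ⟨x, Set.mem_union_left B x.2⟩ ⟨y, Set.mem_union_left B y.2⟩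
            ⟨z, Set.mem_union_left B z.2⟩ : U)) ∧
        (∀ x y z : ↥B, ((mB x y z : U)) =
          (mD ⟨x, Set.mem_union_right A x.2⟩ ⟨y, Set.mem_union_right A y.2⟩
            ⟨z, Set.mem_union_right A z.2⟩ : U))) ∧
    (∀ (A B : Type), Nonempty A → Nonempty B →
      ∀ (mA : A → A → A → A) (mB : B → B → B → B),
      (∀ x y, mA x x y = x ∧ mA x y x = x ∧ mA y x x = x) →
      (∀ x y, mB x x y = x ∧ mB x y x = x ∧ mB y x x = x) →
      ∃ (D : Type) (mD : D → D → D → D) (ι : A → D) (κ : B → D),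
        (∀ x y, mD x x y = x ∧ mD x y x = x ∧ mD y x x = x) ∧
        Function.Injective ι ∧ Function.Injective κ ∧
        (∀ x y z, ι (mA x y z) = mD (ι x) (ι y) (ι z)) ∧
        (∀ x y z, κ (mB x y z) = mD (κ x) (κ y) (κ z))) := by
  constructor
  · intro U A B C _hC mA mB mC hA hB hC hCA hCB hAB hCAeq hCBeq
    refine ⟨glueOp A B mA mB, ?_, ?_, ?_⟩
    · intro x y
      refine ⟨?_, ?_, ?_⟩ <;> simp only [glueOp] <;> split_ifs <;> first | rfl | (try simp_all)
    · intro x y z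
      simp only [glueOp]
      split_ifs with h1 h2 h3 h4 h5
      · have : x = y := Subtype.ext (congrArg (Subtype.val (p := (· ∈ A ∪ B))) h1)
        subst this; exact congrArg Subtype.val (hA x z).1
      · have : x = z := Subtype.ext (congrArg (Subtype.val (p := (· ∈ A ∪ B))) h2)
        subst this; exact congrArg Subtype.val (hA x y).2.1
      · have : y = z := Subtype.ext (congrArg (Subtype.val (p := (· ∈ A ∪ B))) h3)
        subst this; exact congrArg Subtype.val (hA y x).2.2
      · simp [Set.inclusion]
      · exact absurd ⟨x.2, y.2, z.2⟩ h4
      · exact absurd ⟨x.2, y.2, z.2⟩ h4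
    · intro x y z
      simp only [glueOp]
      split_ifs with h1 h2 h3 h4 h5
      · have : x = y := Subtype.ext (congrArg (Subtype.val (p := (· ∈ A ∪ B))) h1)
        subst this; exact congrArg Subtype.val (hB x z).1
      · have : x = z := Subtype.ext (congrArg (Subtype.val (p := (· ∈ A ∪ B))) h2)
        subst this; exact congrArg Subtype.val (hB x y).2.1
      · have : y = z := Subtype.ext (congrArg (Subtype.val (p := (· ∈ A ∪ B))) h3)
        subst this; exact congrArg Subtype.val (hB y x).2.2
      · -- all in A ∩ B = C
        have hx : (x : U) ∈ C := hAB ▸ ⟨h4.1, x.2⟩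
        have hy : (y : U) ∈ C := hAB ▸ ⟨h4.2.1, y.2⟩
        have hz : (z : U) ∈ C := hAB ▸ ⟨h4.2.2, z.2⟩
        have e1 := hCAeq ⟨x, hx⟩ ⟨y, hy⟩ ⟨z, hz⟩
        have e2 := hCBeq ⟨x, hx⟩ ⟨y, hy⟩ ⟨z, hz⟩
        simp [Set.inclusion]
        exact (e2.symm.trans e1)
      · simp [Set.inclusion]
      · exact absurd ⟨x.2, y.2, z.2⟩ h5
  · intro A B _hA _hB mA mB hA hB
    refine ⟨A ⊕ B, sumOp mA mB, Sum.inl, Sum.inr, ?_, Sum.inl_injective, Sum.inr_injective, ?_, ?_⟩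
    · intro x y
      refine ⟨?_, ?_, ?_⟩ <;> simp only [sumOp] <;> split_ifs <;> first | rfl | simp_all
    · intro x y z
      simp only [sumOp]
      split_ifs with h1 h2 h3
      · have : x = y := Sum.inl_injective h1; subst this; exact congrArg Sum.inl (hA x z).1
      · have : x = z := Sum.inl_injective h2; subst this; exact congrArg Sum.inl (hA x y).2.1
      · have : y = z := Sum.inl_injective h3; subst this; exact congrArg Sum.inl (hA y x).2.2
      · rfl
    · intro x y z
      simp only [sumOp]
      split_ifs with h1 h2 h3
      · have : x = y := Sum.inr_injective h1; subst this; exact congrArg Sum.inr (hB x z).1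
      · have : x = z := Sum.inr_injective h2; subst this; exact congrArg Sum.inr (hB x y).2.1
      · have : y = z := Sum.inr_injective h3; subst this; exact congrArg Sum.inr (hB y x).2.2
      · rfl
end

section
/- For every n ≥ 3, the class of algebras with an n-ary near-unanimity operation (an n-ary operation f satisfying f(y,x,…,x) = f(x,y,x,…,x) = ⋯ = f(x,…,x,y) = x) has the strong amalgamation property. -/
/-- For every `n ≥ 3`, the class of algebras with an `n`-ary near-unanimity
operation has the strong amalgamation property. -/
theorem stmt_6 (n : ℕ) (hn : 3 ≤ n) (U : Type) (A B C : Set U) (hCne : C.Nonempty)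
    (fA : (Fin n → ↥A) → ↥A) (fB : (Fin n → ↥B) → ↥B) (fC : (Fin n → ↥C) → ↥C)
    (hA : ∀ (x y : ↥A) (i : Fin n), fA (Function.update (fun _ => x) i y) = x)
    (hB : ∀ (x y : ↥B) (i : Fin n), fB (Function.update (fun _ => x) i y) = x)
    (hC : ∀ (x y : ↥C) (i : Fin n), fC (Function.update (fun _ => x) i y) = x)
    (hCA : C ⊆ A) (hCB : C ⊆ B) (hAB : A ∩ B = C)
    (hextA : ∀ t : Fin n → ↥C, ((fC t : U)) = (fA (fun k => ⟨t k, hCA (t k).2⟩) : U))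
    (hextB : ∀ t : Fin n → ↥C, ((fC t : U)) = (fB (fun k => ⟨t k, hCB (t k).2⟩) : U)) :
    ∃ fD : (Fin n → ↥(A ∪ B)) → ↥(A ∪ B),
      (∀ (x y : ↥(A ∪ B)) (i : Fin n), fD (Function.update (fun _ => x) i y) = x) ∧
      (∀ t : Fin n → ↥A,
        ((fA t : U)) = (fD (fun k => ⟨t k, Set.mem_union_left B (t k).2⟩) : U)) ∧
      (∀ t : Fin n → ↥B,
        ((fB t : U)) = (fD (fun k => ⟨t k, Set.mem_union_right A (t k).2⟩) : U)) := by
  classical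
  haveI : Nontrivial (Fin n) := by
    refine ⟨⟨0, by omega⟩, ⟨1, by omega⟩, ?_⟩
    simp [Fin.ext_iff]
  -- uniqueness of near-unanimous value
  have huniq : ∀ (t : Fin n → ↥(A ∪ B)) (x x' : ↥(A ∪ B)),
      (∃ i : Fin n, ∀ k, k ≠ i → t k = x) →
      (∃ i : Fin n, ∀ k, k ≠ i → t k = x') → x = x' := by
    rintro t x x' ⟨i, hi⟩ ⟨i', hi'⟩
    obtain ⟨k, hk, hk'⟩ : ∃ k : Fin n, k ≠ i ∧ k ≠ i' := by
      by_contra h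
      push_neg at h
      have hsub : (Finset.univ : Finset (Fin n)) ⊆ {i, i'} := by
        intro k _
        rcases eq_or_ne k i with rfl | hk
        · simp
        · simp [h k hk]
      have h1 := Finset.card_le_card hsub
      have h2 : ({i, i'} : Finset (Fin n)).card ≤ 2 := by
        refine le_trans (Finset.card_insert_le _ _) ?_
        simp
      simp [Finset.card_univ] at h1
      omega
    rw [← hi k hk, hi' k hk']
  refine ⟨fun t =>
    if h : ∃ x : ↥(A ∪ B), ∃ i : Fin n, ∀ k, k ≠ i → t k = x then h.choose
    else if ha : ∀ k, (t k : U) ∈ A then ⟨fA (fun k => ⟨t k, ha k⟩), Or.inl (fA _).2⟩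
    else if hb : ∀ k, (t k : U) ∈ B then ⟨fB (fun k => ⟨t k, hb k⟩), Or.inr (fB _).2⟩
    else ⟨hCne.choose, Or.inl (hCA hCne.choose_spec)⟩, ?_, ?_, ?_⟩
  · -- near-unanimity
    intro x y i
    have hP : ∃ x' : ↥(A ∪ B), ∃ i' : Fin n,
        ∀ k, k ≠ i' → Function.update (fun _ => x) i y k = x' :=
      ⟨x, i, fun k hk => Function.update_of_ne hk _ _⟩
    simp only [dif_pos hP]
    exact huniq _ _ _ hP.choose_spec ⟨i, fun k hk => Function.update_of_ne hk _ _⟩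
  · -- extends fA
    intro t
    set t' : Fin n → ↥(A ∪ B) := fun k => ⟨t k, Set.mem_union_left B (t k).2⟩ with ht'
    by_cases h : ∃ x : ↥(A ∪ B), ∃ i : Fin n, ∀ k, k ≠ i → t' k = x
    · simp only [dif_pos h]
      obtain ⟨i, hi⟩ := h.choose_spec
      obtain ⟨j, hj⟩ := exists_ne i
      have ht : t = Function.update (fun _ => t j) i (t i) := by
        funext k
        rcases eq_or_ne k i with rfl | hk
        · simp
        · rw [Function.update_of_ne hk]
          apply Subtype.ext
          have h1 : (t' k : U) = (h.choose : U) := congrArg _ (hi k hk)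
          have h2 : (t' j : U) = (h.choose : U) := congrArg _ (hi j hj)
          simpa [ht'] using h1.trans h2.symm
      have hval := hA (t j) (t i) i
      rw [← ht] at hval
      have h2 : (t' j : U) = (h.choose : U) := congrArg _ (hi j hj)
      rw [hval]
      exact h2

    · have ha : ∀ k, (t' k : U) ∈ A := fun k => (t k).2
      simp only [dif_neg h, dif_pos ha]
      rfl
  · -- extends fB
    intro t
    set t' : Fin n → ↥(A ∪ B) := fun k => ⟨t k, Set.mem_union_right A (t k).2⟩ with ht'
    by_cases h : ∃ x : ↥(A ∪ B), ∃ i : Fin n, ∀ k, k ≠ i → t' k = x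
    · simp only [dif_pos h]
      obtain ⟨i, hi⟩ := h.choose_spec
      obtain ⟨j, hj⟩ := exists_ne i
      have ht : t = Function.update (fun _ => t j) i (t i) := by
        funext k
        rcases eq_or_ne k i with rfl | hk
        · simp
        · rw [Function.update_of_ne hk]
          apply Subtype.ext
          have h1 : (t' k : U) = (h.choose : U) := congrArg _ (hi k hk)
          have h2 : (t' j : U) = (h.choose : U) := congrArg _ (hi j hj)
          simpa [ht'] using h1.trans h2.symm
      have hval := hB (t j) (t i) i
      rw [← ht] at hval
      have h2 : (t' j : U) = (h.choose : U) := congrArg _ (hi j hj)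
      rw [hval]
      exact h2

    · by_cases ha : ∀ k, (t' k : U) ∈ A
      · simp only [dif_neg h, dif_pos ha]
        have hmemC : ∀ k, (t k : U) ∈ C := fun k => hAB ▸ ⟨ha k, (t k).2⟩
        set tC : Fin n → ↥C := fun k => ⟨t k, hmemC k⟩ with htC
        have e1 : (fC tC : U) = (fA (fun k => ⟨tC k, hCA (tC k).2⟩) : U) := hextA tC
        have e2 : (fC tC : U) = (fB (fun k => ⟨tC k, hCB (tC k).2⟩) : U) := hextB tC
        have eA : (fun k => (⟨tC k, hCA (tC k).2⟩ : ↥A)) = fun k => ⟨t' k, ha k⟩ := by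
          funext k; exact Subtype.ext rfl
        have eB : (fun k => (⟨tC k, hCB (tC k).2⟩ : ↥B)) = t := by
          funext k; exact Subtype.ext rfl
        rw [eA] at e1
        rw [eB] at e2
        exact e2.symm.trans e1
      · have hb : ∀ k, (t' k : U) ∈ B := fun k => (t k).2
        simp only [dif_neg h, dif_neg ha, dif_pos hb]
        rfl
end

section
/- The class of algebras with a Pixley operation, i.e. a ternary operation p satisfying p(x,y,y) = x, p(x,y,x) = x, and p(y,y,x) = x, has the strong amalgamation property and the joint embedding property. -/
open Classical in
noncomputable def pixD {U : Type} (A B : Set U)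
    (pA : ↥A → ↥A → ↥A → ↥A) (pB : ↥B → ↥B → ↥B → ↥B) :
    ↥(A ∪ B) → ↥(A ∪ B) → ↥(A ∪ B) → ↥(A ∪ B) :=
  fun x y z =>
    if h : (x : U) ∈ A ∧ (y : U) ∈ A ∧ (z : U) ∈ A then
      ⟨pA ⟨x, h.1⟩ ⟨y, h.2.1⟩ ⟨z, h.2.2⟩,
        Set.mem_union_left B (pA ⟨x, h.1⟩ ⟨y, h.2.1⟩ ⟨z, h.2.2⟩).2⟩
    else if h' : (x : U) ∈ B ∧ (y : U) ∈ B ∧ (z : U) ∈ B then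
      ⟨pB ⟨x, h'.1⟩ ⟨y, h'.2.1⟩ ⟨z, h'.2.2⟩,
        Set.mem_union_right A (pB ⟨x, h'.1⟩ ⟨y, h'.2.1⟩ ⟨z, h'.2.2⟩).2⟩
    else if (y : U) = (z : U) then x
    else if (x : U) = (y : U) then z
    else x

/-- The class of algebras with a Pixley operation has the strong amalgamation
property and the joint embedding property. -/
theorem stmt_7 :
    (∀ (U : Type) (A B C : Set U), C.Nonempty →
      ∀ (pA : ↥A → ↥A → ↥A → ↥A) (pB : ↥B → ↥B → ↥B → ↥B) (pC : ↥C → ↥C → ↥C → ↥C),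
      (∀ x y, pA x y y = x ∧ pA x y x = x ∧ pA y y x = x) →
      (∀ x y, pB x y y = x ∧ pB x y x = x ∧ pB y y x = x) →
      (∀ x y, pC x y y = x ∧ pC x y x = x ∧ pC y y x = x) →
      ∀ (hCA : C ⊆ A) (hCB : C ⊆ B), A ∩ B = C →
      (∀ x y z : ↥C,
        ((pC x y z : U)) = (pA ⟨x, hCA x.2⟩ ⟨y, hCA y.2⟩ ⟨z, hCA z.2⟩ : U)) →
      (∀ x y z : ↥C,
        ((pC x y z : U)) = (pB ⟨x, hCB x.2⟩ ⟨y, hCB y.2⟩ ⟨z, hCB z.2⟩ : U)) →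
      ∃ pD : ↥(A ∪ B) → ↥(A ∪ B) → ↥(A ∪ B) → ↥(A ∪ B),
        (∀ x y, pD x y y = x ∧ pD x y x = x ∧ pD y y x = x) ∧
        (∀ x y z : ↥A, ((pA x y z : U)) =
          (pD ⟨x, Set.mem_union_left B x.2⟩ ⟨y, Set.mem_union_left B y.2⟩
            ⟨z, Set.mem_union_left B z.2⟩ : U)) ∧
        (∀ x y z : ↥B, ((pB x y z : U)) =
          (pD ⟨x, Set.mem_union_right A x.2⟩ ⟨y, Set.mem_union_right A y.2⟩
            ⟨z, Set.mem_union_right A z.2⟩ : U))) ∧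
    (∀ (A B : Type), Nonempty A → Nonempty B →
      ∀ (pA : A → A → A → A) (pB : B → B → B → B),
      (∀ x y, pA x y y = x ∧ pA x y x = x ∧ pA y y x = x) →
      (∀ x y, pB x y y = x ∧ pB x y x = x ∧ pB y y x = x) →
      ∃ (D : Type) (pD : D → D → D → D) (ι : A → D) (κ : B → D),
        (∀ x y, pD x y y = x ∧ pD x y x = x ∧ pD y y x = x) ∧
        Function.Injective ι ∧ Function.Injective κ ∧
        (∀ x y z, ι (pA x y z) = pD (ι x) (ι y) (ι z)) ∧
        (∀ x y z, κ (pB x y z) = pD (κ x) (κ y) (κ z))) := by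
  constructor
  · intro U A B C _ pA pB pC hPA hPB _ hCA hCB hAB hcompA hcompB
    refine ⟨pixD A B pA pB, ?_, ?_, ?_⟩
    · intro x y
      refine ⟨?_, ?_, ?_⟩
      · -- pD x y y = x
        unfold pixD
        split_ifs with h h' h'' h'''
        · have e : (pA ⟨x, h.1⟩ ⟨y, h.2.1⟩ ⟨y, h.2.2⟩ : U) = (x : U) :=
            congrArg Subtype.val ((hPA ⟨x, h.1⟩ ⟨y, h.2.1⟩).1)
          exact Subtype.ext e
        · have e : (pB ⟨x, h'.1⟩ ⟨y, h'.2.1⟩ ⟨y, h'.2.2⟩ : U) = (x : U) :=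
            congrArg Subtype.val ((hPB ⟨x, h'.1⟩ ⟨y, h'.2.1⟩).1)
          exact Subtype.ext e
        · rfl
        · exact absurd rfl h''
        · rfl
      · -- pD x y x = x
        unfold pixD
        split_ifs with h h' h'' h'''
        · have e : (pA ⟨x, h.1⟩ ⟨y, h.2.1⟩ ⟨x, h.2.2⟩ : U) = (x : U) :=
            congrArg Subtype.val ((hPA ⟨x, h.1⟩ ⟨y, h.2.1⟩).2.1)
          exact Subtype.ext e
        · have e : (pB ⟨x, h'.1⟩ ⟨y, h'.2.1⟩ ⟨x, h'.2.2⟩ : U) = (x : U) :=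
            congrArg Subtype.val ((hPB ⟨x, h'.1⟩ ⟨y, h'.2.1⟩).2.1)
          exact Subtype.ext e
        · rfl
        · rfl
        · rfl
      · -- pD y y x = x
        unfold pixD
        split_ifs with h h' h'' h'''
        · have e : (pA ⟨y, h.1⟩ ⟨y, h.2.1⟩ ⟨x, h.2.2⟩ : U) = (x : U) :=
            congrArg Subtype.val ((hPA ⟨x, h.2.2⟩ ⟨y, h.1⟩).2.2)
          exact Subtype.ext e
        · have e : (pB ⟨y, h'.1⟩ ⟨y, h'.2.1⟩ ⟨x, h'.2.2⟩ : U) = (x : U) :=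
            congrArg Subtype.val ((hPB ⟨x, h'.2.2⟩ ⟨y, h'.1⟩).2.2)
          exact Subtype.ext e
        · exact Subtype.ext h''
        · rfl
        · exact absurd rfl h'''
    · intro x y z
      unfold pixD
      rw [dif_pos ⟨x.2, y.2, z.2⟩]
    · intro x y z
      unfold pixD
      by_cases h : (x : U) ∈ A ∧ (y : U) ∈ A ∧ (z : U) ∈ A
      · rw [dif_pos h]
        have hx : (x : U) ∈ C := hAB ▸ ⟨h.1, x.2⟩
        have hy : (y : U) ∈ C := hAB ▸ ⟨h.2.1, y.2⟩
        have hz : (z : U) ∈ C := hAB ▸ ⟨h.2.2, z.2⟩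
        have e1 := hcompA ⟨x, hx⟩ ⟨y, hy⟩ ⟨z, hz⟩
        have e2 := hcompB ⟨x, hx⟩ ⟨y, hy⟩ ⟨z, hz⟩
        exact e2.symm.trans e1
      · rw [dif_neg h, dif_pos ⟨x.2, y.2, z.2⟩]
  · intro A B hA hB pA pB hPA hPB
    obtain ⟨a0⟩ := hA
    obtain ⟨b0⟩ := hB
    refine ⟨A × B, fun x y z => (pA x.1 y.1 z.1, pB x.2 y.2 z.2),
      fun a => (a, b0), fun b => (a0, b), ?_, ?_, ?_, ?_, ?_⟩
    · intro x y
      exact ⟨Prod.ext (hPA _ _).1 (hPB _ _).1,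
        Prod.ext (hPA _ _).2.1 (hPB _ _).2.1,
        Prod.ext (hPA _ _).2.2 (hPB _ _).2.2⟩
    · intro a a' h; exact congrArg Prod.fst h
    · intro b b' h; exact congrArg Prod.snd h
    · intro x y z; exact Prod.ext rfl ((hPB b0 b0).1).symm
    · intro x y z; exact Prod.ext ((hPA a0 a0).1).symm rfl
end

section
/- Let V be a variety with the strong amalgamation property (in the sense that amalgams exist for any configuration A, B, C with A ∩ B = C), and let V_h be the class of pairs (A, h) where A ∈ V and h : A → A is an endomorphism of A. Then V_h has the strong amalgamation property, provided V has pushouts in the category of V-algebras with homomorphisms whose amalgamating objects witness strong amalgamation. -/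
/-- If a variety `V` has pushouts of spans of embeddings that witness strong
amalgamation, then the class `V_h` of algebras of `V` equipped with an endomorphism
`h` has the strong amalgamation property. -/
theorem stmt_8 (L : Lang) (V : ∀ M : Type, OpsOn L M → Prop)
    (hpush : ∀ (C A B : Type) (FC : OpsOn L C) (FA : OpsOn L A) (FB : OpsOn L B),
      V C FC → V A FA → V B FB →
      ∀ (e1 : C → A) (e2 : C → B),
        Function.Injective e1 → IsHom FC FA e1 →
        Function.Injective e2 → IsHom FC FB e2 →
        ∃ (D : Type) (FD : OpsOn L D) (jA : A → D) (jB : B → D),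
          V D FD ∧
          Function.Injective jA ∧ IsHom FA FD jA ∧
          Function.Injective jB ∧ IsHom FB FD jB ∧
          (∀ c, jA (e1 c) = jB (e2 c)) ∧
          (∀ a b, jA a = jB b → ∃ c, a = e1 c ∧ b = e2 c) ∧
          (∀ (E : Type) (FE : OpsOn L E), V E FE →
            ∀ (φA : A → E) (φB : B → E), IsHom FA FE φA → IsHom FB FE φB →
              (∀ c, φA (e1 c) = φB (e2 c)) →
              ∃ ψ : D → E, IsHom FD FE ψ ∧
                (∀ a, ψ (jA a) = φA a) ∧ (∀ b, ψ (jB b) = φB b)))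
    (C A B : Type) (FC : OpsOn L C) (FA : OpsOn L A) (FB : OpsOn L B)
    (hVC : V C FC) (hVA : V A FA) (hVB : V B FB)
    (hC : C → C) (hA : A → A) (hB : B → B)
    (hhC : IsHom FC FC hC) (hhA : IsHom FA FA hA) (hhB : IsHom FB FB hB)
    (e1 : C → A) (e2 : C → B)
    (he1 : Function.Injective e1) (hhom1 : IsHom FC FA e1)
    (he2 : Function.Injective e2) (hhom2 : IsHom FC FB e2)
    (hcomm1 : ∀ c, e1 (hC c) = hA (e1 c)) (hcomm2 : ∀ c, e2 (hC c) = hB (e2 c)) :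
    ∃ (D : Type) (FD : OpsOn L D) (hD : D → D) (jA : A → D) (jB : B → D),
      V D FD ∧ IsHom FD FD hD ∧
      Function.Injective jA ∧ IsHom FA FD jA ∧ (∀ a, jA (hA a) = hD (jA a)) ∧
      Function.Injective jB ∧ IsHom FB FD jB ∧ (∀ b, jB (hB b) = hD (jB b)) ∧
      (∀ c, jA (e1 c) = jB (e2 c)) ∧
      (∀ a b, jA a = jB b → ∃ c, a = e1 c ∧ b = e2 c) := by
  obtain ⟨D, FD, jA, jB, hVD, hjA, hjAh, hjB, hjBh, hsq, hstrong, huniv⟩ :=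
    hpush C A B FC FA FB hVC hVA hVB e1 e2 he1 hhom1 he2 hhom2
  have hagree : ∀ c, (jA ∘ hA) (e1 c) = (jB ∘ hB) (e2 c) := by
    intro c
    simp only [Function.comp_apply, ← hcomm1, ← hcomm2, hsq]
  obtain ⟨ψ, hψhom, hψA, hψB⟩ :=
    huniv D FD hVD (jA ∘ hA) (jB ∘ hB)
      (fun i t => by simp [Function.comp, hhA i t, hjAh i])
      (fun i t => by simp [Function.comp, hhB i t, hjBh i])
      hagree
  exact ⟨D, FD, ψ, jA, jB, hVD, hψhom, hjA, hjAh, fun a => (hψA a).symm,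
    hjB, hjBh, fun b => (hψB b).symm, hsq, hstrong⟩
end

section
/- The class of distributive lattices equipped with a unary operation h satisfying h(x + y) = h(x) + h(y) (h preserves joins but not necessarily meets) does not have the amalgamation property. Concretely: let C be the 3-element chain 0 < 1 < 2 with h the identity; let A = {0,1,2,a} where a is a complement of 1 (a + 1 = 2, a·1 = 0) with h the identity; let B = {0,1,2,b} where b is a complement of 1, with h the identity on {0,1,2} and h(b) = 2. Then A, B, C all satisfy h(x+y) = h(x)+h(y), C is a subalgebra of both A and B, but there is no structure in the class admitting embeddings of A and B agreeing on C. -/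
/-- The common subalgebra: the 3-element chain `0 < 1 < 2` inside the four-element
distributive lattice `Bool × Bool`, with `0 = (false, false)`, `1 = (true, false)`,
`2 = (true, true)`; the extra elements `a = b = (false, true)` are complements of `1`. -/
def chainC : Set (Bool × Bool) := {(false, false), (true, false), (true, true)}

/-- The unary operation of `B`: the identity on the chain, sending the complement
`b = (false, true)` of `1` to the top `2 = (true, true)`. -/
def opB : Bool × Bool → Bool × Bool :=
  fun x => if x = (false, true) then (true, true) else x

lemma relcompl_unique {D : Type} [DistribLattice D] {x y e t b : D}
    (hx1 : x ⊔ e = t) (hx2 : x ⊓ e = b) (hy1 : y ⊔ e = t) (hy2 : y ⊓ e = b) : x = y := by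
  have hx : x = (x ⊓ y) ⊔ b :=
    calc x = x ⊓ t := le_antisymm (le_inf le_rfl (hx1 ▸ le_sup_left)) inf_le_left
    _ = x ⊓ (y ⊔ e) := by rw [hy1]
    _ = (x ⊓ y) ⊔ (x ⊓ e) := inf_sup_left x y e
    _ = (x ⊓ y) ⊔ b := by rw [hx2]
  have hy : y = (x ⊓ y) ⊔ b :=
    calc y = y ⊓ t := le_antisymm (le_inf le_rfl (hy1 ▸ le_sup_left)) inf_le_left
    _ = y ⊓ (x ⊔ e) := by rw [hx1]
    _ = (y ⊓ x) ⊔ (y ⊓ e) := inf_sup_left y x e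
    _ = (x ⊓ y) ⊔ b := by rw [hy2, inf_comm y x]
  exact hx.trans hy.symm

/-- The class of distributive lattices with a unary join-preserving operation `h`
does not have the amalgamation property: the algebra `A` (the lattice `Bool × Bool`
with `h = id`) and the algebra `B` (the same lattice with `h = opB`) both satisfy
`h(x ⊔ y) = h x ⊔ h y` and share the subalgebra `C` (the chain, with `h = id`),
but they admit no pair of embeddings into a common algebra of the class agreeing
on `C`. -/
theorem stmt_9 :
    (∀ x y : Bool × Bool, id (x ⊔ y) = id x ⊔ id y) ∧
    (∀ x y : Bool × Bool, opB (x ⊔ y) = opB x ⊔ opB y) ∧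
    (∀ x ∈ chainC, opB x = x) ∧
    ∀ (D : Type) [instD : DistribLattice D] (hD : D → D) (ι κ : Bool × Bool → D),
      (∀ x y : D, hD (x ⊔ y) = hD x ⊔ hD y) →
      Function.Injective ι → Function.Injective κ →
      (∀ x y, ι (x ⊔ y) = ι x ⊔ ι y) → (∀ x y, ι (x ⊓ y) = ι x ⊓ ι y) →
      (∀ x y, κ (x ⊔ y) = κ x ⊔ κ y) → (∀ x y, κ (x ⊓ y) = κ x ⊓ κ y) →
      (∀ x, hD (ι x) = ι (id x)) → (∀ x, hD (κ x) = κ (opB x)) →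
      ¬ (∀ c ∈ chainC, ι c = κ c) := by
  refine ⟨fun x y => rfl, ?_, ?_, ?_⟩
  · decide
  · intro x hx; rcases hx with rfl | rfl | rfl <;> rfl
  · intro D instD hD ι κ hhD hιinj hκinj hιsup hιinf hκsup hκinf hι hκ hagree
    have h0 : ι (false, false) = κ (false, false) := hagree _ (by simp [chainC])
    have h1 : ι (true, false) = κ (true, false) := hagree _ (by simp [chainC])
    have h2 : ι (true, true) = κ (true, true) := hagree _ (by simp [chainC])
    have e1 : ι (false, true) ⊔ ι (true, false) = ι (true, true) := by
      rw [← hιsup]; rfl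
    have e2 : ι (false, true) ⊓ ι (true, false) = ι (false, false) := by
      rw [← hιinf]; rfl
    have e3 : κ (false, true) ⊔ ι (true, false) = ι (true, true) := by
      rw [h1, h2, ← hκsup]; rfl
    have e4 : κ (false, true) ⊓ ι (true, false) = ι (false, false) := by
      rw [h1, h0, ← hκinf]; rfl
    have hab : ι (false, true) = κ (false, true) := relcompl_unique e1 e2 e3 e4
    have hA : hD (ι (false, true)) = ι (false, true) := hι _
    have hB : hD (κ (false, true)) = κ (true, true) := hκ _
    rw [hab, hB] at hA
    exact absurd (hκinj hA) (by decide)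
end

section
/- The quasivariety Q of algebras with two unary operations f, g axiomatized by the quasiequation (f(x) = f(y)) → x = y (i.e. f is injective) does not have the amalgamation property. Concretely: let C = ℕ⁺ = {1,2,3,…} with f and g both the successor function; let A = ℕ⁺ ∪ {0} with f and g the successor (f(0) = g(0) = 1); let B = ℕ⁺ ∪ {0'} with f the successor (f(0') = 1) and g(0') = 0'. Then f is injective in A, B, C, C is a subalgebra of both A and B with A ∩ B = C, but there is no algebra with injective f admitting embeddings of A and B agreeing on C. -/
/-- The quasivariety of algebras with two unary operations `f`, `g` axiomatized by
`f x = f y → x = y` does not have the amalgamation property.  Concretely, take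
`C = ℕ⁺` with `f = g = succ`; `A = ℕ` with `f = g = succ`; `B = ℕ` (a disjoint copy
of `0`) with `f = succ` and `g 0 = 0`, `g (n+1) = n+2`.  Then `f` is injective in all
three algebras, but there is no algebra with injective `f` admitting embeddings of
`A` and `B` agreeing on `C = {n | 0 < n}`. -/
theorem stmt_11 :
    Function.Injective Nat.succ ∧
    ¬ ∃ (D : Type) (fD gD : D → D) (ι κ : ℕ → D),
        Function.Injective fD ∧ Function.Injective ι ∧ Function.Injective κ ∧
        (∀ n, ι (n + 1) = fD (ι n)) ∧ (∀ n, ι (n + 1) = gD (ι n)) ∧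
        (∀ n, κ (n + 1) = fD (κ n)) ∧
        (∀ n, κ (if n = 0 then 0 else n + 1) = gD (κ n)) ∧
        (∀ n, 0 < n → ι n = κ n) := by
  refine ⟨fun a b h => Nat.succ_injective h, ?_⟩
  rintro ⟨D, fD, gD, ι, κ, hf, hι, hκ, hιf, hιg, hκf, hκg, hagree⟩
  have h1 : ι 1 = κ 1 := hagree 1 one_pos
  have h0 : ι 0 = κ 0 := hf (by rw [← hιf 0, ← hκf 0]; exact h1)
  have hg0 := hκg 0
  norm_num at hg0
  have : ι 1 = ι 0 := by rw [hιg 0, h0, ← hg0, ← h0]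
  exact one_ne_zero (hι this)
end

section
/- Let T be a theory in a relational-functional language L with the strong amalgamation property, such that every model of T extends to a model D containing an element d̄ with R(d̄, d̄, …, d̄) holding for every relation symbol R of L. Let T' ⊇ T in a language L' ⊇ L where L' \ L consists only of function symbols, and suppose T' \ T consists of axioms of the form R(f₁(x̄₁), f₂(x̄₂), …, f_m(x̄_m)) where R ∈ L, f₁, …, f_m ∈ L' \ L, and the sets of variables occurring in x̄₁, …, x̄_m are all equal. Then T' has the strong amalgamation property. -/
/-- A language with relation symbols and function symbols. -/
structure RLang where
  rels : Type
  rarity : rels → ℕ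
  funcs : Type
  farity : funcs → ℕ

/-- A structure for `L` on a subset of the ambient type `U`. -/
structure RStruct (L : RLang) (U : Type) where
  carrier : Set U
  rel : ∀ r : L.rels, (Fin (L.rarity r) → ↥carrier) → Prop
  func : ∀ f : L.funcs, (Fin (L.farity f) → ↥carrier) → ↥carrier

/-- `A` is a substructure of `D`. -/
def RSub {L : RLang} {U : Type} (A D : RStruct L U) : Prop :=
  ∃ h : A.carrier ⊆ D.carrier,
    (∀ f t, ((A.func f t : U)) = (D.func f (fun k => ⟨t k, h (t k).2⟩) : U)) ∧
    (∀ r t, A.rel r t ↔ D.rel r (fun k => ⟨t k, h (t k).2⟩))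

/-- An axiom of the new kind: `R(f₁(x̄₁), …, f_m(x̄_m))` where `R` is a relation of the
base language and the `f_j` are new function symbols, applied to variables. -/
structure NewAx (L : RLang) (ν : Type) (na : ν → ℕ) where
  r : L.rels
  fs : Fin (L.rarity r) → ν
  vs : ∀ j, Fin (na (fs j)) → ℕ

/-- Satisfaction of a new axiom in a structure expanded by interpretations `NF` of the
new function symbols. -/
def SatAx {L : RLang} {ν : Type} {na : ν → ℕ} {U : Type} (S : RStruct L U)
    (NF : ∀ n : ν, (Fin (na n) → ↥S.carrier) → ↥S.carrier) (ax : NewAx L ν na) : Prop :=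
  ∀ σ : ℕ → ↥S.carrier, S.rel ax.r (fun j => NF (ax.fs j) (fun k => σ (ax.vs j k)))

/-- An expanded structure: an `L`-structure together with interpretations of the new
function symbols. -/
structure ERStruct (L : RLang) (ν : Type) (na : ν → ℕ) (U : Type) where
  toR : RStruct L U
  nf : ∀ n : ν, (Fin (na n) → ↥toR.carrier) → ↥toR.carrier

/-- Substructure for expanded structures. -/
def ESub {L : RLang} {ν : Type} {na : ν → ℕ} {U : Type} (A D : ERStruct L ν na U) : Prop :=
  ∃ h : A.toR.carrier ⊆ D.toR.carrier,
    (∀ f t, ((A.toR.func f t : U)) = (D.toR.func f (fun k => ⟨t k, h (t k).2⟩) : U)) ∧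
    (∀ r t, A.toR.rel r t ↔ D.toR.rel r (fun k => ⟨t k, h (t k).2⟩)) ∧
    (∀ n t, ((A.nf n t : U)) = (D.nf n (fun k => ⟨t k, h (t k).2⟩) : U))

/-- Suppose `T` has the strong amalgamation property and every model of `T` extends to
a model containing an element `d̄` with `R(d̄, …, d̄)` for every relation symbol `R`.
Let `T'` extend `T` by new function symbols and axioms `R(f₁(x̄₁), …, f_m(x̄_m))` in
which all the tuples `x̄_j` use the same set of variables.  Then `T'` has the strong
amalgamation property. -/
theorem stmt_15 (L : RLang) (ν : Type) (na : ν → ℕ)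
    (T : ∀ U : Type, RStruct L U → Prop)
    (Axs : Set (NewAx L ν na))
    (hvars : ∀ ax ∈ Axs, ∀ j j', Set.range (ax.vs j) = Set.range (ax.vs j'))
    (hSAP : ∀ (U : Type) (A B C : RStruct L U), T U A → T U B → T U C →
      C.carrier.Nonempty → RSub C A → RSub C B →
      A.carrier ∩ B.carrier = C.carrier →
      ∃ D : RStruct L U, T U D ∧ RSub A D ∧ RSub B D)
    (hext : ∀ (U : Type) (D₁ : RStruct L U), T U D₁ →
      ∃ D : RStruct L U, T U D ∧ RSub D₁ D ∧
        ∃ d : ↥D.carrier, ∀ r, D.rel r (fun _ => d)) :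
    ∀ (U : Type) (A B C : ERStruct L ν na U),
      T U A.toR → T U B.toR → T U C.toR →
      (∀ ax ∈ Axs, SatAx A.toR A.nf ax) → (∀ ax ∈ Axs, SatAx B.toR B.nf ax) →
      (∀ ax ∈ Axs, SatAx C.toR C.nf ax) →
      C.toR.carrier.Nonempty → ESub C A → ESub C B →
      A.toR.carrier ∩ B.toR.carrier = C.toR.carrier →
      ∃ D : ERStruct L ν na U,
        T U D.toR ∧ (∀ ax ∈ Axs, SatAx D.toR D.nf ax) ∧ ESub A D ∧ ESub B D := by
  classical
  intro U A B C hTA hTB hTC hAxA hAxB hAxC hCne hCA hCB hABC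
  obtain ⟨hCAsub, hfCA, hrCA, hnCA⟩ := hCA
  obtain ⟨hCBsub, hfCB, hrCB, hnCB⟩ := hCB
  obtain ⟨D₀, hTD₀, ⟨hAD₀, hfAD₀, hrAD₀⟩, ⟨hBD₀, hfBD₀, hrBD₀⟩⟩ :=
    hSAP U A.toR B.toR C.toR hTA hTB hTC hCne ⟨hCAsub, hfCA, hrCA⟩ ⟨hCBsub, hfCB, hrCB⟩ hABC
  obtain ⟨D, hTD, ⟨hD₀D, hfD₀D, hrD₀D⟩, d, hd⟩ := hext U D₀ hTD₀
  have incA : A.toR.carrier ⊆ D.carrier := fun x hx => hD₀D (hAD₀ hx)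
  have incB : B.toR.carrier ⊆ D.carrier := fun x hx => hD₀D (hBD₀ hx)
  -- interpret new function symbols
  let NF : ∀ n : ν, (Fin (na n) → ↥D.carrier) → ↥D.carrier := fun n t =>
    if hA : ∀ k, (t k : U) ∈ A.toR.carrier then
      ⟨(A.nf n fun k => ⟨t k, hA k⟩ : ↥A.toR.carrier), incA (A.nf n fun k => ⟨t k, hA k⟩).2⟩
    else if hB : ∀ k, (t k : U) ∈ B.toR.carrier then
      ⟨(B.nf n fun k => ⟨t k, hB k⟩ : ↥B.toR.carrier), incB (B.nf n fun k => ⟨t k, hB k⟩).2⟩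
    else d
  have hNF_A : ∀ n t (hA : ∀ k, (t k : U) ∈ A.toR.carrier),
      (NF n t : U) = ((A.nf n fun k => ⟨t k, hA k⟩ : ↥A.toR.carrier) : U) := by
    intro n t hA
    simp only [NF]
    rw [dif_pos hA]
  have hNF_B : ∀ n t, ¬ (∀ k, (t k : U) ∈ A.toR.carrier) →
      ∀ (hB : ∀ k, (t k : U) ∈ B.toR.carrier),
      (NF n t : U) = ((B.nf n fun k => ⟨t k, hB k⟩ : ↥B.toR.carrier) : U) := by
    intro n t hA hB
    simp only [NF]
    rw [dif_neg hA, dif_pos hB]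
  have hNF_d : ∀ n t, ¬ (∀ k, (t k : U) ∈ A.toR.carrier) →
      ¬ (∀ k, (t k : U) ∈ B.toR.carrier) → NF n t = d := by
    intro n t hA hB
    simp only [NF]
    rw [dif_neg hA, dif_neg hB]
  -- if all components are in C, then A.nf and B.nf agree
  have hAB_agree : ∀ n (t : Fin (na n) → ↥D.carrier)
      (hA : ∀ k, (t k : U) ∈ A.toR.carrier) (hB : ∀ k, (t k : U) ∈ B.toR.carrier),
      ((A.nf n fun k => ⟨t k, hA k⟩ : ↥A.toR.carrier) : U)
        = ((B.nf n fun k => ⟨t k, hB k⟩ : ↥B.toR.carrier) : U) := by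
    intro n t hA hB
    have hC : ∀ k, (t k : U) ∈ C.toR.carrier := by
      intro k
      rw [← hABC]
      exact ⟨hA k, hB k⟩
    have e1 := hnCA n (fun k => ⟨t k, hC k⟩)
    have e2 := hnCB n (fun k => ⟨t k, hC k⟩)
    simp only at e1 e2
    rw [← e1, ← e2]
  refine ⟨⟨D, NF⟩, hTD, ?_, ?_, ?_⟩
  · -- new axioms hold in D
    intro ax hax σ
    by_cases hAall : ∀ j k, (σ (ax.vs j k) : U) ∈ A.toR.carrier
    · -- all values used are in A
      obtain ⟨c0, hc0⟩ := hCne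
      let σ' : ℕ → ↥A.toR.carrier := fun m =>
        if h : (σ m : U) ∈ A.toR.carrier then ⟨σ m, h⟩ else ⟨c0, hCAsub hc0⟩
      have hσ' : ∀ j k, ((σ' (ax.vs j k) : U)) = (σ (ax.vs j k) : U) := by
        intro j k
        simp only [σ']
        rw [dif_pos (hAall j k)]
      have hrel := hAxA ax hax σ'
      have hrel2 := (hrD₀D ax.r _).mp ((hrAD₀ ax.r _).mp hrel)
      have heq : (fun j => NF (ax.fs j) fun k => σ (ax.vs j k))
          = (fun j => (⟨(A.nf (ax.fs j) fun k => σ' (ax.vs j k) : ↥A.toR.carrier),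
              hD₀D (hAD₀ (A.nf (ax.fs j) fun k => σ' (ax.vs j k)).2)⟩ : ↥D.carrier)) := by
        funext j
        apply Subtype.ext
        rw [hNF_A (ax.fs j) _ (fun k => hAall j k)]
        exact congrArg Subtype.val
          (congrArg (A.nf (ax.fs j)) (funext fun k => Subtype.ext (hσ' j k).symm))
      rw [heq]
      exact hrel2
    · push_neg at hAall
      obtain ⟨j₀, k₀, hj₀⟩ := hAall
      -- every tuple contains the bad value (not in A)
      have hbadA : ∀ j, ∃ k, ax.vs j k = ax.vs j₀ k₀ := by
        intro j
        have : ax.vs j₀ k₀ ∈ Set.range (ax.vs j) := by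
          rw [hvars ax hax j j₀]
          exact ⟨k₀, rfl⟩
        exact this
      have hnotA : ∀ j, ¬ ∀ k, (σ (ax.vs j k) : U) ∈ A.toR.carrier := by
        intro j h
        obtain ⟨k, hk⟩ := hbadA j
        exact hj₀ (hk ▸ h k)
      by_cases hBall : ∀ j k, (σ (ax.vs j k) : U) ∈ B.toR.carrier
      · obtain ⟨c0, hc0⟩ := hCne
        let σ' : ℕ → ↥B.toR.carrier := fun m =>
          if h : (σ m : U) ∈ B.toR.carrier then ⟨σ m, h⟩ else ⟨c0, hCBsub hc0⟩
        have hσ' : ∀ j k, ((σ' (ax.vs j k) : U)) = (σ (ax.vs j k) : U) := by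
          intro j k
          simp only [σ']
          rw [dif_pos (hBall j k)]
        have hrel := hAxB ax hax σ'
        have hrel2 := (hrD₀D ax.r _).mp ((hrBD₀ ax.r _).mp hrel)
        have heq : (fun j => NF (ax.fs j) fun k => σ (ax.vs j k))
            = (fun j => (⟨(B.nf (ax.fs j) fun k => σ' (ax.vs j k) : ↥B.toR.carrier),
                hD₀D (hBD₀ (B.nf (ax.fs j) fun k => σ' (ax.vs j k)).2)⟩ : ↥D.carrier)) := by
          funext j
          apply Subtype.ext
          rw [hNF_B (ax.fs j) _ (hnotA j) (fun k => hBall j k)]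
          exact congrArg Subtype.val
            (congrArg (B.nf (ax.fs j)) (funext fun k => Subtype.ext (hσ' j k).symm))
        rw [heq]
        exact hrel2
      · push_neg at hBall
        obtain ⟨j₁, k₁, hj₁⟩ := hBall
        have hbadB : ∀ j, ∃ k, ax.vs j k = ax.vs j₁ k₁ := by
          intro j
          have : ax.vs j₁ k₁ ∈ Set.range (ax.vs j) := by
            rw [hvars ax hax j j₁]
            exact ⟨k₁, rfl⟩
          exact this
        have hnotB : ∀ j, ¬ ∀ k, (σ (ax.vs j k) : U) ∈ B.toR.carrier := by
          intro j h
          obtain ⟨k, hk⟩ := hbadB j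
          exact hj₁ (hk ▸ h k)
        have heq : (fun j => NF (ax.fs j) fun k => σ (ax.vs j k))
            = (fun _ => d) := by
          funext j
          exact hNF_d (ax.fs j) _ (hnotA j) (hnotB j)
        rw [heq]
        exact hd ax.r
  · -- ESub A D
    refine ⟨incA, ?_, ?_, ?_⟩
    · intro f t
      rw [hfAD₀ f t, hfD₀D f (fun k => ⟨t k, hAD₀ (t k).2⟩)]
    · intro r t
      rw [hrAD₀ r t, hrD₀D r (fun k => ⟨t k, hAD₀ (t k).2⟩)]
    · intro n t
      rw [hNF_A n _ (fun k => (t k).2)]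
  · -- ESub B D
    refine ⟨incB, ?_, ?_, ?_⟩
    · intro f t
      rw [hfBD₀ f t, hfD₀D f (fun k => ⟨t k, hBD₀ (t k).2⟩)]
    · intro r t
      rw [hrBD₀ r t, hrD₀D r (fun k => ⟨t k, hBD₀ (t k).2⟩)]
    · intro n t
      by_cases hA : ∀ k, ((t k : U)) ∈ A.toR.carrier
      · rw [hNF_A n _ hA, hAB_agree n _ hA (fun k => (t k).2)]
      · rw [hNF_B n _ hA (fun k => (t k).2)]
end

section
/- The class of algebras with ternary operations d₀, d₁, d₂ satisfying Jónsson's equations for congruence distributivity with n = 2 (d₀(x,y,z) = x, d₂(x,y,z) = z, dᵢ(x,y,x) = x for all i, d₀(x,y,y) = d₁(x,y,y), d₁(x,x,y) = d₂(x,x,y)) has the strong amalgamation property. -/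
/-- A triple of ternary operations. -/
structure Jon (M : Type*) where
  d0 : M → M → M → M
  d1 : M → M → M → M
  d2 : M → M → M → M

/-- Jónsson's equations for congruence distributivity with `n = 2`. -/
def Jon.Eqs {M : Type*} (J : Jon M) : Prop :=
  (∀ x y z, J.d0 x y z = x) ∧ (∀ x y z, J.d2 x y z = z) ∧
  (∀ x y, J.d0 x y x = x) ∧ (∀ x y, J.d1 x y x = x) ∧ (∀ x y, J.d2 x y x = x) ∧
  (∀ x y, J.d0 x y y = J.d1 x y y) ∧ (∀ x y, J.d1 x x y = J.d2 x x y)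

/-- The operations of a Jónsson algebra on `S` are the restrictions of those on `T`. -/
def JonExt {U : Type*} {S T : Set U} (h : S ⊆ T) (JS : Jon ↥S) (JT : Jon ↥T) : Prop :=
  ∀ x y z : ↥S,
    ((JS.d0 x y z : U)) = (JT.d0 ⟨x, h x.2⟩ ⟨y, h y.2⟩ ⟨z, h z.2⟩ : U) ∧
    ((JS.d1 x y z : U)) = (JT.d1 ⟨x, h x.2⟩ ⟨y, h y.2⟩ ⟨z, h z.2⟩ : U) ∧
    ((JS.d2 x y z : U)) = (JT.d2 ⟨x, h x.2⟩ ⟨y, h y.2⟩ ⟨z, h z.2⟩ : U)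

/-- The class of algebras with Jónsson operations `d₀, d₁, d₂` (the case `n = 2` of
Jónsson's condition for congruence distributivity) has the strong amalgamation
property. -/
theorem stmt_17 {U : Type} (A B C : Set U) (hCne : C.Nonempty)
    (JA : Jon ↥A) (JB : Jon ↥B) (JC : Jon ↥C)
    (hJA : JA.Eqs) (hJB : JB.Eqs) (hJC : JC.Eqs)
    (hCA : C ⊆ A) (hCB : C ⊆ B) (hAB : A ∩ B = C)
    (hextA : JonExt hCA JC JA) (hextB : JonExt hCB JC JB) :
    ∃ JD : Jon ↥(A ∪ B), JD.Eqs ∧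
      JonExt (Set.subset_union_left : A ⊆ A ∪ B) JA JD ∧
      JonExt (Set.subset_union_right : B ⊆ A ∪ B) JB JD := by
  classical
  obtain ⟨c0, hc0⟩ := hCne
  obtain ⟨hA0, hA2, hA0x, hA1x, hA2x, hA01, hA12⟩ := hJA
  obtain ⟨hB0, hB2, hB0x, hB1x, hB2x, hB01, hB12⟩ := hJB
  set dflt : ↥(A ∪ B) := ⟨c0, Or.inl (hCA hc0)⟩ with hdflt
  set f : ↥(A ∪ B) → ↥(A ∪ B) → ↥(A ∪ B) → ↥(A ∪ B) := fun x y z =>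
    if h : (x : U) ∈ A ∧ (y : U) ∈ A ∧ (z : U) ∈ A then
      ⟨(JA.d1 ⟨x, h.1⟩ ⟨y, h.2.1⟩ ⟨z, h.2.2⟩ : U),
        Or.inl (JA.d1 ⟨x, h.1⟩ ⟨y, h.2.1⟩ ⟨z, h.2.2⟩).2⟩
    else if h' : (x : U) ∈ B ∧ (y : U) ∈ B ∧ (z : U) ∈ B then
      ⟨(JB.d1 ⟨x, h'.1⟩ ⟨y, h'.2.1⟩ ⟨z, h'.2.2⟩ : U),
        Or.inr (JB.d1 ⟨x, h'.1⟩ ⟨y, h'.2.1⟩ ⟨z, h'.2.2⟩).2⟩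
    else if y = z then x else if x = y then z else if x = z then x else dflt
    with hf
  refine ⟨⟨fun x y z => x, f, fun x y z => z⟩, ?_, ?_, ?_⟩
  · refine ⟨fun _ _ _ => rfl, fun _ _ _ => rfl, fun _ _ => rfl, ?_, fun _ _ => rfl, ?_, ?_⟩
    · -- d1 x y x = x
      intro x y
      show f x y x = x
      rw [hf]; dsimp only
      by_cases h : (x : U) ∈ A ∧ (y : U) ∈ A ∧ (x : U) ∈ A
      · rw [dif_pos h]
        exact Subtype.ext (by simpa using congrArg Subtype.val (hA1x ⟨x, h.1⟩ ⟨y, h.2.1⟩))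
      · rw [dif_neg h]
        by_cases h' : (x : U) ∈ B ∧ (y : U) ∈ B ∧ (x : U) ∈ B
        · rw [dif_pos h']
          exact Subtype.ext (by simpa using congrArg Subtype.val (hB1x ⟨x, h'.1⟩ ⟨y, h'.2.1⟩))
        · rw [dif_neg h']
          split_ifs with h1 h2 h3 <;> first | rfl | exact h1 | exact absurd rfl h1 | exact absurd rfl h2 | exact absurd rfl h3
    · -- x = d1 x y y
      intro x y
      show x = f x y y
      rw [hf]; dsimp only
      by_cases h : (x : U) ∈ A ∧ (y : U) ∈ A ∧ (y : U) ∈ A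
      · rw [dif_pos h]
        refine Subtype.ext ?_
        have := congrArg Subtype.val (hA01 ⟨x, h.1⟩ ⟨y, h.2.1⟩)
        simpa [hA0] using this
      · rw [dif_neg h]
        by_cases h' : (x : U) ∈ B ∧ (y : U) ∈ B ∧ (y : U) ∈ B
        · rw [dif_pos h']
          refine Subtype.ext ?_
          have := congrArg Subtype.val (hB01 ⟨x, h'.1⟩ ⟨y, h'.2.1⟩)
          simpa [hB0] using this
        · rw [dif_neg h']
          split_ifs with h1 h2 h3 <;> first | rfl | exact h1 | exact absurd rfl h1 | exact absurd rfl h2 | exact absurd rfl h3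
    · -- d1 x x y = y
      intro x y
      show f x x y = y
      rw [hf]; dsimp only
      by_cases h : (x : U) ∈ A ∧ (x : U) ∈ A ∧ (y : U) ∈ A
      · rw [dif_pos h]
        refine Subtype.ext ?_
        have := congrArg Subtype.val (hA12 ⟨x, h.1⟩ ⟨y, h.2.2⟩)
        simpa [hA2] using this
      · rw [dif_neg h]
        by_cases h' : (x : U) ∈ B ∧ (x : U) ∈ B ∧ (y : U) ∈ B
        · rw [dif_pos h']
          refine Subtype.ext ?_
          have := congrArg Subtype.val (hB12 ⟨x, h'.1⟩ ⟨y, h'.2.2⟩)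
          simpa [hB2] using this
        · rw [dif_neg h']
          split_ifs with h1 h2 h3 <;> first | rfl | exact h1 | exact absurd rfl h1 | exact absurd rfl h2 | exact absurd rfl h3
  · -- extends JA
    intro x y z
    refine ⟨by simp [hA0], ?_, by simp [hA2]⟩
    show _ = (f ⟨x, _⟩ ⟨y, _⟩ ⟨z, _⟩ : U)
    rw [hf]; dsimp only
    have hmem : ((⟨(x : U), Or.inl x.2⟩ : ↥(A ∪ B)) : U) ∈ A ∧
        ((⟨(y : U), Or.inl y.2⟩ : ↥(A ∪ B)) : U) ∈ A ∧
        ((⟨(z : U), Or.inl z.2⟩ : ↥(A ∪ B)) : U) ∈ A := ⟨x.2, y.2, z.2⟩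
    simp only [dif_pos hmem]
  · -- extends JB
    intro x y z
    refine ⟨by simp [hB0], ?_, by simp [hB2]⟩
    show _ = (f ⟨x, _⟩ ⟨y, _⟩ ⟨z, _⟩ : U)
    rw [hf]; dsimp only
    by_cases h : (x : U) ∈ A ∧ (y : U) ∈ A ∧ (z : U) ∈ A
    · simp only [dif_pos h]
      -- all three lie in C
      have hxC : (x : U) ∈ C := hAB ▸ ⟨h.1, x.2⟩
      have hyC : (y : U) ∈ C := hAB ▸ ⟨h.2.1, y.2⟩
      have hzC : (z : U) ∈ C := hAB ▸ ⟨h.2.2, z.2⟩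
      have hb := (hextB ⟨x, hxC⟩ ⟨y, hyC⟩ ⟨z, hzC⟩).2.1
      have ha := (hextA ⟨x, hxC⟩ ⟨y, hyC⟩ ⟨z, hzC⟩).2.1
      have hx : (⟨((⟨(x : U), hxC⟩ : ↥C) : U), hCB hxC⟩ : ↥B) = x := Subtype.ext rfl
      have hy : (⟨((⟨(y : U), hyC⟩ : ↥C) : U), hCB hyC⟩ : ↥B) = y := Subtype.ext rfl
      have hz : (⟨((⟨(z : U), hzC⟩ : ↥C) : U), hCB hzC⟩ : ↥B) = z := Subtype.ext rfl
      rw [hx, hy, hz] at hb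
      rw [← hb, ha]
    · simp only [dif_neg h, dif_pos (⟨x.2, y.2, z.2⟩ :
        ((⟨(x : U), Or.inr x.2⟩ : ↥(A ∪ B)) : U) ∈ B ∧
        ((⟨(y : U), Or.inr y.2⟩ : ↥(A ∪ B)) : U) ∈ B ∧
        ((⟨(z : U), Or.inr z.2⟩ : ↥(A ∪ B)) : U) ∈ B)]
end
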